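/- For a compact Hausdorff space X, if C(X) is monotone complete (every norm-bounded increasing net of real-valued continuous functions has a least upper bound in C(X,ℝ)), then X is extremally disconnected. -/
import Mathlib


open Filter

/-- For a compact Hausdorff space `X`, if `C(X, ℝ)` is monotone complete (every norm-bounded
increasing net of real-valued continuous functions has a least upper bound), then `X` is
extremally disconnected. -/
theorem extremallyDisconnected_of_monotone_complete {X : Type u} [TopologicalSpace X]
    [CompactSpace X] [T2Space X]
    (hcomplete : ∀ (ι : Type u) (_ : Preorder ι),
      ∀ (_ : IsDirected ι (· ≤ ·)) (_ : Nonempty ι) (f : ι → C(X, ℝ)),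
        Monotone f → (∃ C : ℝ, ∀ i, ‖f i‖ ≤ C) → ∃ g : C(X, ℝ), IsLUB (Set.range f) g) :
    ExtremallyDisconnected X := by
  constructor
  intro U hU
  set D : Set C(X, ℝ) := {f | (∀ x, f x ∈ Set.Icc (0:ℝ) 1) ∧ ∀ x ∉ U, f x = 0} with hDdef
  have h0 : (0 : C(X, ℝ)) ∈ D := ⟨fun x => ⟨le_rfl, zero_le_one⟩, fun x _ => rfl⟩
  have hdir : IsDirected (↥D) (· ≤ ·) := by
    constructor
    rintro ⟨a, ha1, ha2⟩ ⟨b, hb1, hb2⟩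
    refine ⟨⟨a ⊔ b, fun x => ?_, fun x hx => ?_⟩, ?_, ?_⟩
    · simp only [ContinuousMap.sup_apply]
      exact ⟨le_max_of_le_left (ha1 x).1, max_le (ha1 x).2 (hb1 x).2⟩
    · simp only [ContinuousMap.sup_apply, ha2 x hx, hb2 x hx, max_self]
    · exact (le_sup_left : a ≤ a ⊔ b)
    · exact (le_sup_right : b ≤ a ⊔ b)
  obtain ⟨g, hub, hlub⟩ := hcomplete (↥D) inferInstance hdir ⟨⟨0, h0⟩⟩
    (fun f => (f : C(X, ℝ))) (fun a b h => h)
    ⟨1, fun i => (ContinuousMap.norm_le _ zero_le_one).mpr fun x => by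
      have h := i.2.1 x
      rw [Real.norm_eq_abs, abs_le]
      exact ⟨by linarith [h.1], h.2⟩⟩
  have hg0 : (0 : C(X, ℝ)) ≤ g := hub ⟨⟨0, h0⟩, rfl⟩
  have hgle1 : g ≤ (1 : C(X, ℝ)) := by
    apply hlub
    rintro _ ⟨i, rfl⟩
    refine ContinuousMap.le_def.mpr fun x => ?_
    exact (i.2.1 x).2
  -- g = 1 on U
  have hU1 : ∀ x ∈ U, g x = 1 := by
    intro x hx
    obtain ⟨f, hf0, hf1, hf01⟩ := exists_continuous_zero_one_of_isClosed
      (isClosed_compl_iff.mpr hU) (isClosed_singleton (x := x))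
      (by simp [Set.disjoint_singleton_right, hx])
    have hfD : f ∈ D := ⟨hf01, fun y hy => hf0 hy⟩
    have hfg : f ≤ g := hub ⟨⟨f, hfD⟩, rfl⟩
    have h1 : f x = 1 := hf1 rfl
    have h2 : f x ≤ g x := ContinuousMap.le_def.mp hfg x
    have h3 : g x ≤ (1 : C(X, ℝ)) x := ContinuousMap.le_def.mp hgle1 x
    simp only [ContinuousMap.one_apply] at h3
    linarith
  -- g = 1 on closure U
  have hcl1 : ∀ x ∈ closure U, g x = 1 := by
    have hsub : closure U ⊆ g ⁻¹' {1} := by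
      apply closure_minimal
      · intro x hx; exact hU1 x hx
      · exact (isClosed_singleton).preimage g.continuous
    intro x hx; exact hsub hx
  -- g = 0 off closure U
  have hcl0 : ∀ x, x ∉ closure U → g x = 0 := by
    intro x hx
    obtain ⟨k, hk0, hk1, hk01⟩ := exists_continuous_zero_one_of_isClosed
      (isClosed_singleton (x := x)) isClosed_closure
      (Set.disjoint_singleton_left.mpr hx)
    have hkub : g ≤ k := by
      apply hlub
      rintro _ ⟨i, rfl⟩
      refine ContinuousMap.le_def.mpr fun y => ?_
      by_cases hy : y ∈ U
      · have h : k y = 1 := hk1 (subset_closure hy)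
        rw [h]
        exact (i.2.1 y).2
      · rw [i.2.2 y hy]
        exact (hk01 y).1
    have h1 : g x ≤ k x := ContinuousMap.le_def.mp hkub x
    have h2 : k x = 0 := hk0 rfl
    have h3 : (0 : C(X, ℝ)) x ≤ g x := ContinuousMap.le_def.mp hg0 x
    simp only [ContinuousMap.zero_apply] at h3
    linarith
  have key : closure U = g ⁻¹' (Set.Ioi (1/2 : ℝ)) := by
    ext y
    simp only [Set.mem_preimage, Set.mem_Ioi]
    constructor
    · intro hy; rw [hcl1 y hy]; norm_num
    · intro hy
      by_contra hcon
      rw [hcl0 y hcon] at hy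
      norm_num at hy
  rw [key]
  exact isOpen_Ioi.preimage g.continuous
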